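/- arXiv:1605.03471 — 4 statements merged into one kernel-verified Lean document; each statement's English description precedes it below -/
import Mathlib

section
/- The function b ↦ Ψ(b,θ) has a unique minimizer over ℝ if and only if τ ∉ {Σ_{j=1}^{k} θ_j : k = 1, …, J−1}, i.e. if and only if τ is not equal to any of the partial sums θ_1, θ_1+θ_2, …, θ_1+⋯+θ_{J−1}. -/
noncomputable def rho (τ e : ℝ) : ℝ :=
  |e| * ((1 - τ) * (if e < 0 then 1 else 0) + τ * (if 0 ≤ e then 1 else 0))

noncomputable def Psi (τ : ℝ) {J : ℕ} (s θ : Fin J → ℝ) (b : ℝ) : ℝ :=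
  ∑ j, θ j * rho τ (s j - b)

lemma rho_eq (τ e : ℝ) : rho τ e = τ * e + max (-e) 0 := by
  unfold rho
  rcases lt_or_ge e 0 with h | h
  · rw [abs_of_neg h]
    simp [h, not_le.mpr h, max_eq_left (by linarith : (0:ℝ) ≤ -e)]
    ring
  · rw [abs_of_nonneg h]
    simp [not_lt.mpr h, h, max_eq_right (by linarith : -e ≤ 0)]
    ring

lemma rho_eq' (τ a b : ℝ) : rho τ (a - b) = τ * (a - b) + max (b - a) 0 := by
  rw [rho_eq, neg_sub]

lemma Psi_sub (τ : ℝ) {J : ℕ} (s θ : Fin J → ℝ) (hθsum : ∑ j, θ j = 1) (b b' : ℝ) :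
    Psi τ s θ b' - Psi τ s θ b
      = τ * (b - b') + ∑ j, θ j * (max (b' - s j) 0 - max (b - s j) 0) := by
  unfold Psi
  rw [← Finset.sum_sub_distrib]
  have h1 : ∀ j ∈ Finset.univ, θ j * rho τ (s j - b') - θ j * rho τ (s j - b)
      = θ j * (τ * (b - b')) + θ j * (max (b' - s j) 0 - max (b - s j) 0) := by
    intro j _
    rw [rho_eq', rho_eq']
    ring
  rw [Finset.sum_congr rfl h1, Finset.sum_add_distrib, ← Finset.sum_mul]
  rw [hθsum]
  ring

lemma max_sub_max_ge {b b' c : ℝ} (h : b ≤ b') :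
    (if c ≤ b then b' - b else 0) ≤ max (b' - c) 0 - max (b - c) 0 := by
  rcases le_or_gt c b with h1 | h1 <;>
    simp only [max_def] <;> split_ifs <;> linarith

lemma max_sub_max_le {b b' c : ℝ} (h : b ≤ b') :
    max (b' - c) 0 - max (b - c) 0 ≤ if c < b' then b' - b else 0 := by
  rcases lt_or_ge c b' with h1 | h1 <;>
    simp only [max_def] <;> split_ifs <;> linarith

lemma key_lb (τ : ℝ) {J : ℕ} (s θ : Fin J → ℝ) (hs : StrictMono s)
    (hθ : ∀ j, 0 ≤ θ j) (hθsum : ∑ j, θ j = 1) (m : Fin J) (b : ℝ) (h : s m ≤ b) :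
    ((∑ j ∈ Finset.Iic m, θ j) - τ) * (b - s m) ≤ Psi τ s θ b - Psi τ s θ (s m) := by
  rw [Psi_sub τ s θ hθsum (s m) b]
  have h1 : ∑ j, θ j * (if s j ≤ s m then b - s m else 0)
      ≤ ∑ j, θ j * (max (b - s j) 0 - max (s m - s j) 0) := by
    apply Finset.sum_le_sum
    intro j _
    exact mul_le_mul_of_nonneg_left (max_sub_max_ge h) (hθ j)
  have h2 : ∑ j, θ j * (if s j ≤ s m then b - s m else 0)
      = (∑ j ∈ Finset.Iic m, θ j) * (b - s m) := by
    simp_rw [hs.le_iff_le, mul_ite, mul_zero]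
    rw [Finset.sum_ite, Finset.sum_const_zero, add_zero, ← Finset.sum_mul]
    congr 1
    apply Finset.sum_congr _ (fun _ _ => rfl)
    ext j; simp
  nlinarith [h1, h2]

lemma key_ub (τ : ℝ) {J : ℕ} (s θ : Fin J → ℝ) (hs : StrictMono s)
    (hθ : ∀ j, 0 ≤ θ j) (hθsum : ∑ j, θ j = 1) (m : Fin J) (b : ℝ) (h : b ≤ s m) :
    Psi τ s θ (s m) - Psi τ s θ b ≤ ((∑ j ∈ Finset.Iio m, θ j) - τ) * (s m - b) := by
  rw [Psi_sub τ s θ hθsum b (s m)]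
  have h1 : ∑ j, θ j * (max (s m - s j) 0 - max (b - s j) 0)
      ≤ ∑ j, θ j * (if s j < s m then s m - b else 0) := by
    apply Finset.sum_le_sum
    intro j _
    exact mul_le_mul_of_nonneg_left (max_sub_max_le h) (hθ j)
  have h2 : ∑ j, θ j * (if s j < s m then s m - b else 0)
      = (∑ j ∈ Finset.Iio m, θ j) * (s m - b) := by
    simp_rw [hs.lt_iff_lt, mul_ite, mul_zero]
    rw [Finset.sum_ite, Finset.sum_const_zero, add_zero, ← Finset.sum_mul]
    congr 1
    apply Finset.sum_congr _ (fun _ _ => rfl)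
    ext j; simp
  nlinarith [h1, h2]

/-- b ↦ Ψ(b,θ) has a unique minimizer over ℝ iff τ is not equal to any of the
partial sums θ_1, θ_1+θ_2, …, θ_1+⋯+θ_{J−1}. -/
theorem stmt_3 (τ : ℝ) (hτ : τ ∈ Set.Ioo (0 : ℝ) 1) {J : ℕ} (hJ : 2 ≤ J)
    (s : Fin J → ℝ) (hs : StrictMono s)
    (θ : Fin J → ℝ) (hθpos : ∀ j, 0 < θ j) (hθsum : ∑ j, θ j = 1) :
    (∃! β : ℝ, ∀ b : ℝ, Psi τ s θ β ≤ Psi τ s θ b) ↔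
      ∀ k : Fin J, (k : ℕ) + 1 < J → τ ≠ ∑ j ∈ Finset.Iic k, θ j := by
  obtain ⟨hτ0, hτ1⟩ := hτ
  have hθ : ∀ j, 0 ≤ θ j := fun j => (hθpos j).le
  have Iic_split : ∀ m : Fin J, ∑ j ∈ Finset.Iic m, θ j = (∑ j ∈ Finset.Iio m, θ j) + θ m := by
    intro m
    rw [← Finset.Iio_insert, Finset.sum_insert (by simp)]
    ring
  constructor
  · rintro ⟨β, hβ, huniq⟩ k hk heq
    set k1 : Fin J := ⟨(k : ℕ) + 1, hk⟩ with hk1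
    have hkk1 : k < k1 := by simp [Fin.lt_def, hk1]
    -- s k is a minimizer
    have min1 : ∀ b, Psi τ s θ (s k) ≤ Psi τ s θ b := by
      intro b
      rcases le_total (s k) b with hb | hb
      · have := key_lb τ s θ hs hθ hθsum k b hb
        have e0 : ((∑ j ∈ Finset.Iic k, θ j) - τ) * (b - s k) = 0 := by
          rw [← heq]; ring
        linarith
      · have := key_ub τ s θ hs hθ hθsum k b hb
        have e0 : (∑ j ∈ Finset.Iio k, θ j) - τ = -θ k := by
          have := Iic_split k; rw [← heq] at this; linarith
        rw [e0] at this
        nlinarith [hθpos k]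
    -- s k1 is a minimizer
    have hIio : Finset.Iio k1 = Finset.Iic k := by
      ext j; simp only [Finset.mem_Iio, Finset.mem_Iic, hk1, Fin.lt_def, Fin.le_def]; omega
    have min2 : ∀ b, Psi τ s θ (s k1) ≤ Psi τ s θ b := by
      intro b
      rcases le_total (s k1) b with hb | hb
      · have := key_lb τ s θ hs hθ hθsum k1 b hb
        have e0 : τ ≤ ∑ j ∈ Finset.Iic k1, θ j := by
          rw [heq]
          apply Finset.sum_le_sum_of_subset_of_nonneg
          · exact Finset.Iic_subset_Iic.mpr hkk1.le
          · intro j _ _; exact hθ j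
        nlinarith
      · have := key_ub τ s θ hs hθ hθsum k1 b hb
        have e0 : ((∑ j ∈ Finset.Iio k1, θ j) - τ) * (s k1 - b) = 0 := by
          rw [hIio, ← heq]; ring
        linarith
    have e1 := huniq (s k) min1
    have e2 := huniq (s k1) min2
    have : s k < s k1 := hs hkk1
    rw [e1, e2] at this
    exact lt_irrefl _ this
  · intro h
    haveI : NeZero J := ⟨by omega⟩
    set P : Fin J → ℝ := fun k => ∑ j ∈ Finset.Iic k, θ j with hP
    have hlast : P ⟨J - 1, by omega⟩ = 1 := by
      rw [hP, ← hθsum]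
      apply Finset.sum_congr _ (fun _ _ => rfl)
      ext j; simp [Fin.le_def]; omega
    set T := Finset.univ.filter (fun k : Fin J => τ < P k) with hT
    have hne : T.Nonempty := ⟨⟨J - 1, by omega⟩, by simp [hT, hlast, hτ1]⟩
    set m := T.min' hne with hm
    have hmT : m ∈ T := T.min'_mem hne
    have hm1 : τ < P m := (Finset.mem_filter.mp hmT).2
    have hmin : ∀ k : Fin J, k < m → P k < τ := by
      intro k hk
      have h1 : ¬ τ < P k := by
        intro hc
        have : m ≤ k := T.min'_le k (by simp [hT, hc])
        exact absurd hk (not_lt.mpr this)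
      have h2 : τ ≠ P k := by
        apply h k
        have : (k : ℕ) < (m : ℕ) := hk
        omega
      rcases lt_or_eq_of_le (not_lt.mp h1) with h3 | h3
      · exact h3
      · exact absurd h3.symm h2
    have hIiolt : (∑ j ∈ Finset.Iio m, θ j) < τ := by
      rcases Nat.eq_zero_or_pos (m : ℕ) with h0 | h0
      · have : Finset.Iio m = ∅ := by
          ext j; simp [Fin.lt_def, h0]
        rw [this]; simpa using hτ0
      · set m' : Fin J := ⟨(m : ℕ) - 1, by omega⟩ with hm'
        have hlt : m' < m := by simp only [Fin.lt_def, hm', Fin.val_mk]; omega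
        have : Finset.Iio m = Finset.Iic m' := by
          ext j; simp only [Finset.mem_Iio, Finset.mem_Iic, hm', Fin.lt_def, Fin.le_def]; omega
        rw [this]
        exact hmin m' hlt
    refine ⟨s m, ?_, ?_⟩
    · intro b
      rcases le_total (s m) b with hb | hb
      · have := key_lb τ s θ hs hθ hθsum m b hb
        nlinarith
      · have := key_ub τ s θ hs hθ hθsum m b hb
        nlinarith
    · intro b hb
      by_contra hne'
      rcases lt_or_gt_of_ne hne' with hlt | hgt
      · have h1 := key_ub τ s θ hs hθ hθsum m b hlt.le
        have h2 := hb (s m)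
        nlinarith
      · have h1 := key_lb τ s θ hs hθ hθsum m b hgt.le
        have h2 := hb (s m)
        nlinarith
end

section
/- Suppose β* ∈ ℝ is the unique minimizer of b ↦ Ψ(b,θ*) for a probability vector θ* with strictly positive entries. Then there exists δ > 0 such that for every probability vector θ with strictly positive entries satisfying max_{1≤j≤J} |θ_j − θ*_j| < δ, β* is again the unique minimizer over ℝ of b ↦ Ψ(b,θ); in particular the map sending θ to the minimizer of Ψ(·,θ) is constant on a neighborhood of θ*. -/
lemma rho_of_nonpos {τ e : ℝ} (he : e ≤ 0) : rho τ e = (1 - τ) * (-e) := by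
  rcases lt_or_eq_of_le he with h | h
  · rw [rho, if_pos h, if_neg (not_le.mpr h), abs_of_neg h]; ring
  · rw [h]; simp [rho]

lemma rho_of_nonneg {τ e : ℝ} (he : 0 ≤ e) : rho τ e = τ * e := by
  rw [rho, if_neg (not_lt.mpr he), if_pos he, abs_of_nonneg he]; ring

lemma rho_eq_max (τ e : ℝ) : rho τ e = τ * max e 0 + (1 - τ) * max (-e) 0 := by
  rcases le_total e 0 with h | h
  · rw [rho_of_nonpos h, max_eq_right h, max_eq_left (by linarith : (0:ℝ) ≤ -e)]; ring
  · rw [rho_of_nonneg h, max_eq_left h, max_eq_right (by linarith : -e ≤ 0)]; ring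

lemma rho_neg (τ e : ℝ) : rho τ (-e) = rho (1 - τ) e := by
  rcases le_total e 0 with h | h
  · rw [rho_of_nonneg (by linarith : (0:ℝ) ≤ -e), rho_of_nonpos h]; ring
  · rw [rho_of_nonpos (by linarith : -e ≤ 0), rho_of_nonneg h]; ring

lemma Psi_neg (τ : ℝ) {J : ℕ} (s θ : Fin J → ℝ) (b : ℝ) :
    Psi (1 - τ) (fun j => -(s j)) θ (-b) = Psi τ s θ b := by
  unfold Psi
  apply Finset.sum_congr rfl
  intro j _
  rw [show -(s j) - (-b) = -(s j - b) by ring, rho_neg, sub_sub_cancel]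

lemma rho_convex {τ : ℝ} (hτ0 : 0 < τ) (hτ1 : τ < 1) {a b lam mu : ℝ}
    (hl : 0 ≤ lam) (hm : 0 ≤ mu) (hlm : lam + mu = 1) :
    rho τ (lam * a + mu * b) ≤ lam * rho τ a + mu * rho τ b := by
  rw [rho_eq_max, rho_eq_max, rho_eq_max]
  have h1 : max (lam * a + mu * b) 0 ≤ lam * max a 0 + mu * max b 0 := by
    apply max_le
    · have t1 := mul_le_mul_of_nonneg_left (le_max_left a 0) hl
      have t2 := mul_le_mul_of_nonneg_left (le_max_left b 0) hm
      linarith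
    · have t1 := mul_le_mul_of_nonneg_left (le_max_right a 0) hl
      have t2 := mul_le_mul_of_nonneg_left (le_max_right b 0) hm
      linarith
  have h2 : max (-(lam * a + mu * b)) 0 ≤ lam * max (-a) 0 + mu * max (-b) 0 := by
    rw [show -(lam * a + mu * b) = lam * (-a) + mu * (-b) by ring]
    apply max_le
    · have t1 := mul_le_mul_of_nonneg_left (le_max_left (-a) 0) hl
      have t2 := mul_le_mul_of_nonneg_left (le_max_left (-b) 0) hm
      linarith
    · have t1 := mul_le_mul_of_nonneg_left (le_max_right (-a) 0) hl
      have t2 := mul_le_mul_of_nonneg_left (le_max_right (-b) 0) hm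
      linarith
  nlinarith [mul_le_mul_of_nonneg_left h1 hτ0.le,
    mul_le_mul_of_nonneg_left h2 (by linarith : (0:ℝ) ≤ 1 - τ)]

lemma rho_lipschitz {τ : ℝ} (hτ0 : 0 < τ) (hτ1 : τ < 1) (a b : ℝ) :
    |rho τ a - rho τ b| ≤ |a - b| := by
  rw [rho_eq_max, rho_eq_max]
  have h1 : |max a 0 - max b 0| ≤ |a - b| := abs_max_sub_max_le_abs a b 0
  have h2 : |max (-a) 0 - max (-b) 0| ≤ |a - b| := by
    have := abs_max_sub_max_le_abs (-a) (-b) 0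
    rwa [show -a - -b = -(a - b) by ring, abs_neg] at this
  have h3 : τ * max a 0 + (1 - τ) * max (-a) 0 - (τ * max b 0 + (1 - τ) * max (-b) 0)
      = τ * (max a 0 - max b 0) + (1 - τ) * (max (-a) 0 - max (-b) 0) := by ring
  rw [h3]
  calc |τ * (max a 0 - max b 0) + (1 - τ) * (max (-a) 0 - max (-b) 0)|
      ≤ |τ * (max a 0 - max b 0)| + |(1 - τ) * (max (-a) 0 - max (-b) 0)| := abs_add_le _ _
    _ = τ * |max a 0 - max b 0| + (1 - τ) * |max (-a) 0 - max (-b) 0| := by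
        rw [abs_mul, abs_mul, abs_of_pos hτ0, abs_of_pos (by linarith : (0:ℝ) < 1 - τ)]
    _ ≤ τ * |a - b| + (1 - τ) * |a - b| := by
        have := mul_le_mul_of_nonneg_left h1 hτ0.le
        have := mul_le_mul_of_nonneg_left h2 (by linarith : (0:ℝ) ≤ 1 - τ)
        linarith
    _ = |a - b| := by ring

/-- One-sided key lemma: if there is no kink of Ψ(·,θ) strictly between β and β+ε
and Ψ(β) < Ψ(β+ε), then Ψ(β) < Ψ(b) for all b > β. -/
lemma key_right (τ : ℝ) (hτ0 : 0 < τ) (hτ1 : τ < 1) {J : ℕ} (s θ : Fin J → ℝ)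
    (hθ : ∀ j, 0 ≤ θ j) (β ε : ℝ) (hε : 0 < ε)
    (hsep : ∀ j, s j ≤ β ∨ β + ε ≤ s j)
    (hlt : Psi τ s θ β < Psi τ s θ (β + ε)) :
    ∀ b, β < b → Psi τ s θ β < Psi τ s θ b := by
  intro b hb
  rcases le_or_gt b (β + ε) with hcase | hcase
  · -- linear regime
    obtain ⟨t, ht0, ht1, rfl⟩ : ∃ t, 0 < t ∧ t ≤ 1 ∧ b = β + t * ε :=
      ⟨(b - β) / ε, div_pos (by linarith) hε,
        by rw [div_le_one hε]; linarith, by field_simp; ring⟩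
    have htε : 0 < t * ε := mul_pos ht0 hε
    have htε1 : t * ε ≤ ε := by nlinarith
    have heq : Psi τ s θ (β + t * ε) = (1 - t) * Psi τ s θ β + t * Psi τ s θ (β + ε) := by
      unfold Psi
      rw [Finset.mul_sum, Finset.mul_sum, ← Finset.sum_add_distrib]
      apply Finset.sum_congr rfl
      intro j _
      rcases hsep j with h | h
      · rw [rho_of_nonpos (by linarith : s j - (β + t * ε) ≤ 0),
            rho_of_nonpos (by linarith : s j - β ≤ 0),
            rho_of_nonpos (by linarith : s j - (β + ε) ≤ 0)]
        ring
      · rw [rho_of_nonneg (by linarith : (0:ℝ) ≤ s j - (β + t * ε)),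
            rho_of_nonneg (by linarith : (0:ℝ) ≤ s j - β),
            rho_of_nonneg (by linarith : (0:ℝ) ≤ s j - (β + ε))]
        ring
    rw [heq]
    nlinarith
  · -- convex regime
    have hb' : 0 < b - β := by linarith
    obtain ⟨lam, hl0, hl1, hmul⟩ : ∃ lam, 0 < lam ∧ lam < 1 ∧ lam * (b - β) = ε :=
      ⟨ε / (b - β), div_pos hε hb', (div_lt_one hb').mpr (by linarith),
        div_mul_cancel₀ _ hb'.ne'⟩
    have hconv : Psi τ s θ (β + ε) ≤ (1 - lam) * Psi τ s θ β + lam * Psi τ s θ b := by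
      unfold Psi
      rw [Finset.mul_sum, Finset.mul_sum, ← Finset.sum_add_distrib]
      apply Finset.sum_le_sum
      intro j _
      have harg : s j - (β + ε) = (1 - lam) * (s j - β) + lam * (s j - b) := by
        linear_combination hmul
      rw [harg]
      have hc := rho_convex hτ0 hτ1 (by linarith : (0:ℝ) ≤ 1 - lam) hl0.le
        (by ring : (1 - lam) + lam = 1) (a := s j - β) (b := s j - b)
      nlinarith [mul_le_mul_of_nonneg_left hc (hθ j)]
    nlinarith

/-- If β* is the unique minimizer of b ↦ Ψ(b,θ*), then there is δ > 0 such that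
for every probability vector θ with positive entries and max_j |θ_j − θ*_j| < δ,
β* is again the unique minimizer of b ↦ Ψ(b,θ). -/
theorem stmt_6 (τ : ℝ) (hτ : τ ∈ Set.Ioo (0 : ℝ) 1) {J : ℕ} (hJ : 2 ≤ J)
    (s : Fin J → ℝ) (hs : StrictMono s)
    (θstar : Fin J → ℝ) (hθpos : ∀ j, 0 < θstar j) (hθsum : ∑ j, θstar j = 1)
    (βstar : ℝ)
    (huniq : ∀ b : ℝ, b ≠ βstar → Psi τ s θstar βstar < Psi τ s θstar b) :
    ∃ δ > (0 : ℝ), ∀ θ : Fin J → ℝ, (∀ j, 0 < θ j) → (∑ j, θ j = 1) →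
      (∀ j, |θ j - θstar j| < δ) →
      ∀ b : ℝ, b ≠ βstar → Psi τ s θ βstar < Psi τ s θ b := by
  obtain ⟨hτ0, hτ1⟩ := hτ
  -- there is some j with s j ≠ βstar
  have hex : ∃ j, s j ≠ βstar := by
    by_contra h
    push_neg at h
    have h01 : (⟨0, by omega⟩ : Fin J) < ⟨1, by omega⟩ := by
      rw [Fin.mk_lt_mk]; omega
    have := hs h01
    rw [h ⟨0, by omega⟩, h ⟨1, by omega⟩] at this
    exact lt_irrefl _ this
  obtain ⟨j0, hj0⟩ := hex
  set T : Finset (Fin J) := Finset.univ.filter (fun j => s j ≠ βstar) with hT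
  have hTne : T.Nonempty := ⟨j0, by simp [hT, hj0]⟩
  have hinf_pos : 0 < T.inf' hTne fun j => |s j - βstar| := by
    rw [Finset.lt_inf'_iff]
    intro j hj
    have hj' : s j ≠ βstar := by simpa [hT] using hj
    exact abs_pos.mpr (sub_ne_zero.mpr hj')
  set ε := (T.inf' hTne fun j => |s j - βstar|) / 2 with hε
  have hεpos : 0 < ε := by positivity
  have hsep : ∀ j, s j ≠ βstar → ε < |s j - βstar| := by
    intro j hj
    have h1 : (T.inf' hTne fun j => |s j - βstar|) ≤ |s j - βstar| :=
      Finset.inf'_le _ (by simp [hT, hj])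
    rw [hε]; linarith
  have hsepR : ∀ j, s j ≤ βstar ∨ βstar + ε ≤ s j := by
    intro j
    rcases eq_or_ne (s j) βstar with h | h
    · left; exact h.le
    · rcases le_or_gt (s j) βstar with h' | h'
      · left; exact h'
      · right
        have := hsep j h
        rw [abs_of_pos (by linarith : (0:ℝ) < s j - βstar)] at this
        linarith
  have hsepL : ∀ j, βstar ≤ s j ∨ s j ≤ βstar - ε := by
    intro j
    rcases eq_or_ne (s j) βstar with h | h
    · left; exact h.ge
    · rcases le_or_gt βstar (s j) with h' | h'
      · left; exact h'
      · right
        have := hsep j h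
        rw [abs_of_neg (by linarith : s j - βstar < 0)] at this
        linarith
  have hc1 : 0 < Psi τ s θstar (βstar + ε) - Psi τ s θstar βstar := by
    have := huniq (βstar + ε) (by intro h; nlinarith [congrArg id h])
    linarith
  have hc2 : 0 < Psi τ s θstar (βstar - ε) - Psi τ s θstar βstar := by
    have := huniq (βstar - ε) (by intro h; nlinarith [congrArg id h])
    linarith
  set c := min (Psi τ s θstar (βstar + ε) - Psi τ s θstar βstar)
    (Psi τ s θstar (βstar - ε) - Psi τ s θstar βstar) with hcdef
  have hcpos : 0 < c := lt_min hc1 hc2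
  set δ := c / (2 * J * ε + 1) with hδ
  have hδpos : 0 < δ := by positivity
  have hJδε : (J : ℝ) * δ * ε < c / 2 := by
    have hd : (0:ℝ) < 2 * J * ε + 1 := by positivity
    have hcc : δ * (2 * J * ε + 1) = c := by
      rw [hδ]; field_simp
    nlinarith [hδpos, mul_nonneg (mul_nonneg (Nat.cast_nonneg J : (0:ℝ) ≤ J) hδpos.le) hεpos.le]
  refine ⟨δ, hδpos, ?_⟩
  intro θ hθpos' hθsum' hθcl b hb
  -- perturbation bound
  have hpert : ∀ b0 : ℝ, |βstar - b0| ≤ ε →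
      |(Psi τ s θ b0 - Psi τ s θ βstar) - (Psi τ s θstar b0 - Psi τ s θstar βstar)|
        ≤ J * δ * ε := by
    intro b0 hb0
    have heq : (Psi τ s θ b0 - Psi τ s θ βstar) - (Psi τ s θstar b0 - Psi τ s θstar βstar)
        = ∑ j, (θ j - θstar j) * (rho τ (s j - b0) - rho τ (s j - βstar)) := by
      unfold Psi
      rw [← Finset.sum_sub_distrib, ← Finset.sum_sub_distrib, ← Finset.sum_sub_distrib]
      apply Finset.sum_congr rfl
      intro j _; ring
    rw [heq]
    calc |∑ j, (θ j - θstar j) * (rho τ (s j - b0) - rho τ (s j - βstar))|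
        ≤ ∑ j, |(θ j - θstar j) * (rho τ (s j - b0) - rho τ (s j - βstar))| :=
          Finset.abs_sum_le_sum_abs _ _
      _ ≤ ∑ _j : Fin J, δ * ε := by
          apply Finset.sum_le_sum
          intro j _
          rw [abs_mul]
          have h1 : |θ j - θstar j| ≤ δ := (hθcl j).le
          have h2 : |rho τ (s j - b0) - rho τ (s j - βstar)| ≤ ε := by
            have hl := rho_lipschitz hτ0 hτ1 (s j - b0) (s j - βstar)
            rw [show (s j - b0) - (s j - βstar) = βstar - b0 by ring] at hl
            linarith
          exact mul_le_mul h1 h2 (abs_nonneg _) hδpos.le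
      _ = J * δ * ε := by
          rw [Finset.sum_const, Finset.card_univ, Fintype.card_fin, nsmul_eq_mul]; ring
  have hR : Psi τ s θ βstar < Psi τ s θ (βstar + ε) := by
    have hp := hpert (βstar + ε)
      (by rw [show βstar - (βstar + ε) = -ε by ring, abs_neg, abs_of_pos hεpos])
    have h1 := (abs_le.mp hp).1
    have h2 : c ≤ Psi τ s θstar (βstar + ε) - Psi τ s θstar βstar := min_le_left _ _
    linarith
  have hL : Psi τ s θ βstar < Psi τ s θ (βstar - ε) := by
    have hp := hpert (βstar - ε)
      (by rw [show βstar - (βstar - ε) = ε by ring, abs_of_pos hεpos])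
    have h1 := (abs_le.mp hp).1
    have h2 : c ≤ Psi τ s θstar (βstar - ε) - Psi τ s θstar βstar := min_le_right _ _
    linarith
  rcases lt_or_gt_of_ne hb with h | h
  · -- b < βstar: use the reflected key lemma
    have hsepL' : ∀ j, (fun j => -(s j)) j ≤ -βstar ∨ -βstar + ε ≤ (fun j => -(s j)) j := by
      intro j
      rcases hsepL j with h' | h'
      · left; simp only; linarith
      · right; simp only; linarith
    have hlt' : Psi (1 - τ) (fun j => -(s j)) θ (-βstar)
        < Psi (1 - τ) (fun j => -(s j)) θ (-βstar + ε) := by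
      rw [show -βstar + ε = -(βstar - ε) by ring, Psi_neg, Psi_neg]
      exact hL
    have hkey := key_right (1 - τ) (by linarith) (by linarith) (fun j => -(s j)) θ
      (fun j => (hθpos' j).le) (-βstar) ε hεpos hsepL' hlt' (-b) (by linarith)
    rwa [Psi_neg, Psi_neg] at hkey
  · exact key_right τ hτ0 hτ1 s θ (fun j => (hθpos' j).le) βstar ε hεpos hsepR hR b h
end

section
/- For fixed a, b > 0 and fixed τ ∈ (0,1), lim_{ε→0+} aε · B(τ; aε, bε) = 1, where B(τ;α,β) = ∫_0^τ x^{α−1}(1−x)^{β−1} dx. -/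
/-- The incomplete beta function B(x;α,β) = ∫_0^x t^{α−1}(1−t)^{β−1} dt. -/
noncomputable def incBeta (x a b : ℝ) : ℝ :=
  ∫ t in (0 : ℝ)..x, t ^ (a - 1) * (1 - t) ^ (b - 1)

/-- The beta function B(α,β) = Γ(α)Γ(β)/Γ(α+β). -/
noncomputable def betaFn (a b : ℝ) : ℝ :=
  Real.Gamma a * Real.Gamma b / Real.Gamma (a + b)

/-- The regularized incomplete beta function I_x(α,β) = B(x;α,β)/B(α,β). -/
noncomputable def Ireg (x a b : ℝ) : ℝ := incBeta x a b / betaFn a b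

open Real MeasureTheory Filter Set intervalIntegral

lemma beta_integrand_integrable {α β τ : ℝ} (hα : 0 < α) (hβ : 0 < β)
    (hτ0 : 0 < τ) (hτ1 : τ < 1) :
    IntervalIntegrable (fun t : ℝ => t ^ (α - 1) * (1 - t) ^ (β - 1)) volume 0 τ := by
  have hg : IntervalIntegrable (fun t : ℝ => (max 1 ((1 - τ) ^ (β - 1))) * t ^ (α - 1))
      volume 0 τ :=
    (intervalIntegral.intervalIntegrable_rpow' (by linarith)).const_mul _
  rw [intervalIntegrable_iff_integrableOn_Ioc_of_le hτ0.le] at hg ⊢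
  have hcont : ContinuousOn (fun t : ℝ => t ^ (α - 1) * (1 - t) ^ (β - 1)) (Ioc 0 τ) := by
    apply ContinuousOn.mul
    · exact (continuousOn_id.rpow_const fun t ht => Or.inl (ne_of_gt ht.1))
    · exact ((continuousOn_const.sub continuousOn_id).rpow_const
        fun t ht => Or.inl (by have := ht.2; change (1:ℝ) - t ≠ 0; intro h; linarith))
  refine hg.mono' (hcont.aestronglyMeasurable measurableSet_Ioc) ?_
  filter_upwards [ae_restrict_mem measurableSet_Ioc] with t ht
  have ht0 : 0 < t := ht.1
  have ht1 : t ≤ τ := ht.2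
  have h1 : (0:ℝ) < 1 - τ := by linarith
  have hfe : (1 - t) ^ (β - 1) ≤ max 1 ((1 - τ) ^ (β - 1)) := by
    rcases le_or_gt β 1 with hb | hb
    · exact le_max_of_le_right (rpow_le_rpow_of_nonpos h1 (by linarith) (by linarith))
    · exact le_max_of_le_left (rpow_le_one (by linarith) (by linarith) (by linarith))
  have hfnn : 0 ≤ t ^ (α - 1) * (1 - t) ^ (β - 1) :=
    mul_nonneg (rpow_nonneg ht0.le _) (rpow_nonneg (by linarith) _)
  rw [Real.norm_of_nonneg hfnn, mul_comm (max 1 ((1 - τ) ^ (β - 1)))]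
  exact mul_le_mul_of_nonneg_left hfe (rpow_nonneg ht0.le _)

lemma incBeta_bounds {α β τ : ℝ} (hα : 0 < α) (hβ : 0 < β) (hβ1 : β ≤ 1)
    (hτ0 : 0 < τ) (hτ1 : τ < 1) :
    τ ^ α ≤ α * (∫ t in (0:ℝ)..τ, t ^ (α - 1) * (1 - t) ^ (β - 1)) ∧
    α * (∫ t in (0:ℝ)..τ, t ^ (α - 1) * (1 - t) ^ (β - 1)) ≤
      τ ^ α + α * (1 - τ)⁻¹ * (τ ^ (α + 1) / (α + 1)) := by
  set K : ℝ := (1 - τ)⁻¹ with hK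
  have h1 : (0:ℝ) < 1 - τ := by linarith
  have hint := beta_integrand_integrable hα hβ hτ0 hτ1
  have hlo : IntervalIntegrable (fun t : ℝ => t ^ (α - 1)) volume 0 τ :=
    intervalIntegral.intervalIntegrable_rpow' (by linarith)
  have hhi : IntervalIntegrable (fun t : ℝ => t ^ (α - 1) + K * t ^ α) volume 0 τ :=
    hlo.add ((intervalIntegral.intervalIntegrable_rpow' (by linarith)).const_mul K)
  have hIlo : ∫ t in (0:ℝ)..τ, t ^ (α - 1) = τ ^ α / α := by
    rw [integral_rpow (Or.inl (by linarith))]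
    rw [Real.zero_rpow (by linarith : α - 1 + 1 ≠ 0)]
    ring_nf
  have hIhi : ∫ t in (0:ℝ)..τ, (t ^ (α - 1) + K * t ^ α) =
      τ ^ α / α + K * (τ ^ (α + 1) / (α + 1)) := by
    rw [intervalIntegral.integral_add hlo
      ((intervalIntegral.intervalIntegrable_rpow' (by linarith)).const_mul K),
      intervalIntegral.integral_const_mul, hIlo, integral_rpow (Or.inl (by linarith)),
      Real.zero_rpow (by linarith : α + 1 ≠ 0)]
    ring_nf
  constructor
  · have hle : ∫ t in (0:ℝ)..τ, t ^ (α - 1) ≤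
        ∫ t in (0:ℝ)..τ, t ^ (α - 1) * (1 - t) ^ (β - 1) := by
      apply intervalIntegral.integral_mono_on hτ0.le hlo hint
      intro t ht
      rcases eq_or_lt_of_le ht.1 with h0 | h0
      · simp [← h0]
      · have : (1:ℝ) ≤ (1 - t) ^ (β - 1) :=
          Real.one_le_rpow_of_pos_of_le_one_of_nonpos (by nlinarith [ht.2]) (by linarith [h0])
            (by linarith)
        nlinarith [Real.rpow_nonneg h0.le (α - 1)]
    calc τ ^ α = α * (τ ^ α / α) := by field_simp
    _ ≤ _ := mul_le_mul_of_nonneg_left (hIlo ▸ hle) hα.le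
  · have hle : ∫ t in (0:ℝ)..τ, t ^ (α - 1) * (1 - t) ^ (β - 1) ≤
        ∫ t in (0:ℝ)..τ, (t ^ (α - 1) + K * t ^ α) := by
      apply intervalIntegral.integral_mono_on hτ0.le hint hhi
      intro t ht
      rcases eq_or_lt_of_le ht.1 with h0 | h0
      · rw [← h0]
        simp [Real.zero_rpow (by linarith : α ≠ 0)]
      · have ht1 : t < 1 := by nlinarith [ht.2]
        have hb : (1 - t) ^ (β - 1) ≤ (1 - t) ^ (-1 : ℝ) :=
          Real.rpow_le_rpow_of_exponent_ge (by linarith) (by linarith) (by linarith)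
        have hb2 : (1 - t) ^ (-1 : ℝ) ≤ 1 + K * t := by
          rw [Real.rpow_neg_one]
          have hK1 : K * (1 - τ) = 1 := inv_mul_cancel₀ (ne_of_gt h1)
          have hK0 : 0 ≤ K := by positivity
          rw [inv_eq_one_div, div_le_iff₀ (by linarith : (0:ℝ) < 1 - t)]
          nlinarith [mul_nonneg (mul_nonneg h0.le hK0) (sub_nonneg.mpr ht.2), hK1]
        have htα : t ^ (α - 1) * t = t ^ α := by
          rw [← Real.rpow_add_one h0.ne' (α - 1)]
          norm_num
        calc t ^ (α - 1) * (1 - t) ^ (β - 1) ≤ t ^ (α - 1) * (1 + K * t) :=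
          mul_le_mul_of_nonneg_left (hb.trans hb2) (Real.rpow_nonneg h0.le _)
        _ = t ^ (α - 1) + K * t ^ α := by rw [mul_add, mul_one, ← htα]; ring
    calc α * (∫ t in (0:ℝ)..τ, t ^ (α - 1) * (1 - t) ^ (β - 1))
        ≤ α * (τ ^ α / α + K * (τ ^ (α + 1) / (α + 1))) :=
          mul_le_mul_of_nonneg_left (hIhi ▸ hle) hα.le
    _ = τ ^ α + α * K * (τ ^ (α + 1) / (α + 1)) := by field_simp


/-- For fixed a, b > 0 and τ ∈ (0,1), lim_{ε→0+} aε · B(τ; aε, bε) = 1. -/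
theorem stmt_15 (a b : ℝ) (ha : 0 < a) (hb : 0 < b)
    (τ : ℝ) (hτ : τ ∈ Set.Ioo (0 : ℝ) 1) :
    Filter.Tendsto (fun ε : ℝ => a * ε * incBeta τ (a * ε) (b * ε))
      (nhdsWithin 0 (Set.Ioi 0)) (nhds 1) := by
  obtain ⟨hτ0, hτ1⟩ := hτ
  have hαt : Tendsto (fun ε : ℝ => a * ε) (nhdsWithin 0 (Set.Ioi 0)) (nhds 0) := by
    have h : Tendsto (fun ε : ℝ => a * ε) (nhds 0) (nhds (a * 0)) :=
      (continuous_const.mul continuous_id).tendsto (0:ℝ)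
    rw [mul_zero] at h
    exact h.mono_left nhdsWithin_le_nhds
  have hrc : ContinuousAt (fun y : ℝ => τ ^ y) 0 := Real.continuousAt_const_rpow hτ0.ne'
  have ht1 : Tendsto (fun ε : ℝ => τ ^ (a * ε)) (nhdsWithin 0 (Set.Ioi 0)) (nhds 1) := by
    have := hrc.tendsto.comp hαt
    simpa [Function.comp_def, Real.rpow_zero] using this
  have htup : Tendsto (fun ε : ℝ => τ ^ (a * ε) + a * ε * (1 - τ)⁻¹ *
      (τ ^ (a * ε + 1) / (a * ε + 1))) (nhdsWithin 0 (Set.Ioi 0)) (nhds 1) := by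
    have hA1 : Tendsto (fun ε : ℝ => a * ε + 1) (nhdsWithin 0 (Set.Ioi 0)) (nhds 1) := by
      simpa using hαt.add (tendsto_const_nhds (x := (1:ℝ)))
    have hrc1 : ContinuousAt (fun y : ℝ => τ ^ y) 1 := Real.continuousAt_const_rpow hτ0.ne'
    have hnum : Tendsto (fun ε : ℝ => τ ^ (a * ε + 1)) (nhdsWithin 0 (Set.Ioi 0))
        (nhds (τ ^ (1:ℝ))) := hrc1.tendsto.comp hA1
    have hdiv : Tendsto (fun ε : ℝ => τ ^ (a * ε + 1) / (a * ε + 1))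
        (nhdsWithin 0 (Set.Ioi 0)) (nhds (τ ^ (1:ℝ) / 1)) := hnum.div hA1 one_ne_zero
    have := ht1.add (((hαt.mul_const ((1 - τ)⁻¹)).mul hdiv))
    simpa using this
  have hmem : Set.Ioo (0:ℝ) b⁻¹ ∈ nhdsWithin 0 (Set.Ioi 0) :=
    Ioo_mem_nhdsGT_of_mem ⟨le_refl 0, inv_pos.mpr hb⟩
  apply tendsto_of_tendsto_of_tendsto_of_le_of_le' ht1 htup
  · filter_upwards [hmem] with ε hε
    exact (incBeta_bounds (mul_pos ha hε.1) (mul_pos hb hε.1)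
      (by rw [← mul_inv_cancel₀ hb.ne']; exact mul_le_mul_of_nonneg_left hε.2.le hb.le)
      hτ0 hτ1).1
  · filter_upwards [hmem] with ε hε
    exact (incBeta_bounds (mul_pos ha hε.1) (mul_pos hb hε.1)
      (by rw [← mul_inv_cancel₀ hb.ne']; exact mul_le_mul_of_nonneg_left hε.2.le hb.le)
      hτ0 hτ1).2
end

section
/- For fixed a, b > 0 and fixed τ ∈ (0,1), lim_{ε→0+} I_τ(aε, bε) = b/(a+b). -/
open Filter Set MeasureTheory intervalIntegral

lemma aux_integral_rpow0 {r τ : ℝ} (hr : -1 < r) :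
    ∫ t in (0:ℝ)..τ, t ^ r = τ ^ (r + 1) / (r + 1) := by
  rw [integral_rpow (Or.inl hr), Real.zero_rpow (by linarith), sub_zero]

lemma aux_incBeta_integrable {α β τ : ℝ} (hα : 0 < α) (hβ1 : β ≤ 1) (hτ0 : 0 < τ)
    (hτ1 : τ < 1) :
    IntervalIntegrable (fun t : ℝ => t ^ (α - 1) * (1 - t) ^ (β - 1)) volume 0 τ := by
  have hg : IntervalIntegrable (fun t : ℝ => (1 - τ) ^ (β - 1) * t ^ (α - 1)) volume 0 τ :=
    (intervalIntegral.intervalIntegrable_rpow' (by linarith)).const_mul _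
  refine hg.mono_fun' ?_ ?_
  · exact ((measurable_id.pow_const (α - 1)).mul
      ((measurable_const.sub measurable_id).pow_const (β - 1))).aestronglyMeasurable
  · rw [Filter.EventuallyLE, ae_restrict_iff' measurableSet_uIoc]
    refine Eventually.of_forall fun t ht => ?_
    rw [uIoc_of_le hτ0.le] at ht
    obtain ⟨ht0, htτ⟩ := ht
    have h1t : (0:ℝ) < 1 - t := by linarith
    have h1 : (1 - t) ^ (β - 1) ≤ (1 - τ) ^ (β - 1) :=
      Real.rpow_le_rpow_of_nonpos (by linarith) (by linarith) (by linarith)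
    have h2 : (0:ℝ) ≤ t ^ (α - 1) := Real.rpow_nonneg ht0.le _
    rw [Real.norm_eq_abs, abs_of_nonneg (mul_nonneg h2 (Real.rpow_nonneg h1t.le _))]
    calc t ^ (α-1) * (1-t)^(β-1) ≤ t^(α-1) * (1-τ)^(β-1) := mul_le_mul_of_nonneg_left h1 h2
      _ = (1-τ)^(β-1) * t^(α-1) := mul_comm _ _

lemma aux_incBeta_lower {α β τ : ℝ} (hα : 0 < α) (hβ1 : β ≤ 1) (hτ0 : 0 < τ) (hτ1 : τ < 1) :
    τ ^ α / α ≤ incBeta τ α β := by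
  have hi := aux_incBeta_integrable hα hβ1 hτ0 hτ1
  have hg : IntervalIntegrable (fun t : ℝ => t ^ (α - 1)) volume 0 τ :=
    intervalIntegral.intervalIntegrable_rpow' (by linarith)
  have h := intervalIntegral.integral_mono_on hτ0.le hg hi (fun t ht => ?_)
  · rw [aux_integral_rpow0 (by linarith), show α - 1 + 1 = α by ring] at h
    exact h
  · obtain ⟨ht0, htτ⟩ := ht
    have h1 : 1 ≤ (1 - t) ^ (β - 1) :=
      Real.one_le_rpow_of_pos_of_le_one_of_nonpos (by linarith) (by linarith) (by linarith)
    exact le_mul_of_one_le_right (Real.rpow_nonneg ht0 _) h1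

lemma aux_incBeta_upper {α β τ : ℝ} (hα : 0 < α) (hβ0 : 0 < β) (hβ1 : β ≤ 1) (hτ0 : 0 < τ)
    (hτ1 : τ < 1) :
    incBeta τ α β ≤ τ ^ α / α + τ ^ (α + 1) / ((α + 1) * (1 - τ)) := by
  have hi := aux_incBeta_integrable hα hβ1 hτ0 hτ1
  have hg1 : IntervalIntegrable (fun t : ℝ => t ^ (α - 1)) volume 0 τ :=
    intervalIntegral.intervalIntegrable_rpow' (by linarith)
  have hg2 : IntervalIntegrable (fun t : ℝ => t ^ α / (1 - τ)) volume 0 τ :=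
    (intervalIntegral.intervalIntegrable_rpow' (by linarith)).div_const _
  have h := intervalIntegral.integral_mono_on hτ0.le hi (hg1.add hg2) (fun t ht => ?_)
  · rw [intervalIntegral.integral_add hg1 hg2, aux_integral_rpow0 (show (-1:ℝ) < α - 1 by linarith),
      show α - 1 + 1 = α by ring, intervalIntegral.integral_div,
      aux_integral_rpow0 (show (-1:ℝ) < α by linarith), div_div] at h
    exact h
  · obtain ⟨ht0, htτ⟩ := ht
    rcases eq_or_lt_of_le ht0 with rfl | ht0'
    · simp only [sub_zero, Real.one_rpow, mul_one]
      have : (0:ℝ) ^ α = 0 := Real.zero_rpow hα.ne'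
      rw [this]
      simp [le_of_eq, le_add_of_nonneg_right]
    · have h1t : (0:ℝ) < 1 - t := by linarith
      have h3 : (1 - t) ^ (β - 1) ≤ (1 - t) ^ (-1 : ℝ) :=
        Real.rpow_le_rpow_of_exponent_ge h1t (by linarith) (by linarith)
      have h4 : (1 - t) ^ (-1 : ℝ) = (1 - t)⁻¹ := Real.rpow_neg_one _
      have h5 : (1 - t)⁻¹ ≤ 1 + t / (1 - τ) := by
        rw [inv_eq_one_div, div_le_iff₀ h1t]
        have h1τ : (0:ℝ) < 1 - τ := by linarith
        have hu0 : 0 ≤ t / (1 - τ) := by positivity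
        have hut : t / (1 - τ) * (1 - τ) = t := div_mul_cancel₀ _ h1τ.ne'
        nlinarith [mul_nonneg hu0 (sub_nonneg.mpr htτ)]
      have h6 : t ^ (α - 1) * (1 - t) ^ (β - 1) ≤ t ^ (α - 1) * (1 + t / (1 - τ)) :=
        mul_le_mul_of_nonneg_left (h3.trans (h4 ▸ h5)) (Real.rpow_nonneg ht0 _)
      calc t ^ (α - 1) * (1 - t) ^ (β - 1) ≤ t ^ (α - 1) * (1 + t / (1 - τ)) := h6
        _ = t ^ (α - 1) + t ^ α / (1 - τ) := by
            have : t ^ α = t ^ (α - 1) * t := by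
              rw [show α = α - 1 + 1 by ring, Real.rpow_add_one ht0'.ne']
              ring_nf
            rw [mul_add, mul_one, this]
            ring

/-- For fixed a, b > 0 and τ ∈ (0,1), lim_{ε→0+} I_τ(aε, bε) = b/(a+b). -/
theorem stmt_16 (a b : ℝ) (ha : 0 < a) (hb : 0 < b)
    (τ : ℝ) (hτ : τ ∈ Set.Ioo (0 : ℝ) 1) :
    Filter.Tendsto (fun ε : ℝ => Ireg τ (a * ε) (b * ε))
      (nhdsWithin 0 (Set.Ioi 0)) (nhds (b / (a + b))) := by
  obtain ⟨hτ0, hτ1⟩ := hτ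
  -- limit of τ ^ (a * ε)
  have hrpow : ∀ c : ℝ, Tendsto (fun ε : ℝ => τ ^ (c * ε)) (nhds 0) (nhds 1) := by
    intro c
    have h1 : Tendsto (fun ε : ℝ => c * ε) (nhds 0) (nhds 0) := by
      simpa using (tendsto_id (α := ℝ) (x := nhds 0)).const_mul c |>.congr (fun x => rfl)
    have h2 : ContinuousAt (fun y : ℝ => τ ^ y) 0 := Real.continuousAt_const_rpow hτ0.ne'
    simpa [Real.rpow_zero, Function.comp_def] using h2.tendsto.comp h1
  -- part 1 : ε * incBeta → 1/a
  have h1 : Tendsto (fun ε : ℝ => ε * incBeta τ (a * ε) (b * ε))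
      (nhdsWithin 0 (Set.Ioi 0)) (nhds (1 / a)) := by
    have hlow : Tendsto (fun ε : ℝ => τ ^ (a * ε) / a) (nhdsWithin 0 (Set.Ioi 0))
        (nhds (1 / a)) := ((hrpow a).div_const a).mono_left nhdsWithin_le_nhds
    have hupp : Tendsto (fun ε : ℝ => τ ^ (a * ε) / a
        + ε * (τ ^ (a * ε + 1) / ((a * ε + 1) * (1 - τ)))) (nhdsWithin 0 (Set.Ioi 0))
        (nhds (1 / a)) := by
      have hA : Tendsto (fun ε : ℝ => τ ^ (a * ε + 1)) (nhds 0) (nhds (τ ^ (1:ℝ))) := by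
        have h1 : Tendsto (fun ε : ℝ => a * ε + 1) (nhds 0) (nhds 1) := by
          have := ((tendsto_id (α := ℝ) (x := nhds 0)).const_mul a).add_const 1
          simpa using this
        exact (Real.continuousAt_const_rpow hτ0.ne').tendsto.comp h1
      have hB : Tendsto (fun ε : ℝ => (a * ε + 1) * (1 - τ)) (nhds 0) (nhds (1 * (1 - τ))) := by
        have h1 : Tendsto (fun ε : ℝ => a * ε + 1) (nhds 0) (nhds 1) := by
          have := ((tendsto_id (α := ℝ) (x := nhds 0)).const_mul a).add_const 1
          simpa using this
        exact h1.mul_const _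
      have hC : Tendsto (fun ε : ℝ => ε * (τ ^ (a * ε + 1) / ((a * ε + 1) * (1 - τ))))
          (nhds 0) (nhds 0) := by
        have := tendsto_id (α := ℝ) (x := nhds 0) |>.mul
          (hA.div hB (by simp; intro h; linarith))
        simpa using this
      have := (((hrpow a).div_const a).add hC)
      simpa using this.mono_left nhdsWithin_le_nhds
    have hev : ∀ᶠ ε in nhdsWithin (0:ℝ) (Set.Ioi 0), 0 < ε ∧ ε < 1 / b := by
      filter_upwards [self_mem_nhdsWithin,
        eventually_nhdsWithin_of_eventually_nhds (eventually_lt_nhds (by positivity : (0:ℝ) < 1/b))]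
        with ε h1 h2
      exact ⟨h1, h2⟩
    refine tendsto_of_tendsto_of_tendsto_of_le_of_le' hlow hupp ?_ ?_
    · filter_upwards [hev] with ε ⟨hε0, hεb⟩
      have hα : 0 < a * ε := by positivity
      have hβ1 : b * ε ≤ 1 := by
        have h := mul_lt_mul_of_pos_left hεb hb
        rw [mul_one_div, div_self hb.ne'] at h
        linarith
      have := aux_incBeta_lower (α := a * ε) (β := b * ε) hα hβ1 hτ0 hτ1
      calc τ ^ (a * ε) / a = ε * (τ ^ (a * ε) / (a * ε)) := by
            field_simp
        _ ≤ ε * incBeta τ (a * ε) (b * ε) := by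
            exact mul_le_mul_of_nonneg_left this hε0.le
    · filter_upwards [hev] with ε ⟨hε0, hεb⟩
      have hα : 0 < a * ε := by positivity
      have hβ0 : 0 < b * ε := by positivity
      have hβ1 : b * ε ≤ 1 := by
        have h := mul_lt_mul_of_pos_left hεb hb
        rw [mul_one_div, div_self hb.ne'] at h
        linarith
      have := aux_incBeta_upper (α := a * ε) (β := b * ε) hα hβ0 hβ1 hτ0 hτ1
      calc ε * incBeta τ (a * ε) (b * ε)
          ≤ ε * (τ ^ (a*ε) / (a*ε) + τ ^ (a*ε + 1) / ((a*ε + 1) * (1 - τ))) :=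
            mul_le_mul_of_nonneg_left this hε0.le
        _ = τ ^ (a * ε) / a + ε * (τ ^ (a * ε + 1) / ((a * ε + 1) * (1 - τ))) := by
            rw [mul_add]
            congr 1
            field_simp
  -- part 2 : ε * betaFn → (a+b)/(a*b)
  have hGamma : ∀ c : ℝ, Tendsto (fun ε : ℝ => Real.Gamma (1 + c * ε)) (nhds 0) (nhds 1) := by
    intro c
    have hc : ContinuousAt Real.Gamma 1 := by
      refine (Real.differentiableAt_Gamma fun m => ?_).continuousAt
      exact ne_of_gt (lt_of_le_of_lt (neg_nonpos.mpr m.cast_nonneg) one_pos)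
    have h1 : Tendsto (fun ε : ℝ => 1 + c * ε) (nhds 0) (nhds 1) := by
      have := ((tendsto_id (α := ℝ) (x := nhds 0)).const_mul c).const_add 1
      simpa using this
    simpa [Real.Gamma_one, Function.comp_def] using hc.tendsto.comp h1
  have h2 : Tendsto (fun ε : ℝ => ε * betaFn (a * ε) (b * ε))
      (nhdsWithin 0 (Set.Ioi 0)) (nhds ((a + b) / (a * b))) := by
    have hF : Tendsto (fun ε : ℝ => (a + b) / (a * b) *
        (Real.Gamma (1 + a * ε) * Real.Gamma (1 + b * ε) / Real.Gamma (1 + (a + b) * ε)))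
        (nhds 0) (nhds ((a + b) / (a * b))) := by
      have := (((hGamma a).mul (hGamma b)).div (hGamma (a + b)) one_ne_zero).const_mul
        ((a + b) / (a * b))
      simpa using this
    refine Tendsto.congr' ?_ (hF.mono_left nhdsWithin_le_nhds)
    filter_upwards [self_mem_nhdsWithin] with ε (hε0 : 0 < ε)
    have haε : a * ε ≠ 0 := by positivity
    have hbε : b * ε ≠ 0 := by positivity
    have habε : (a + b) * ε ≠ 0 := by positivity
    have e1 : Real.Gamma (1 + a * ε) = a * ε * Real.Gamma (a * ε) := by
      rw [add_comm, Real.Gamma_add_one haε]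
    have e2 : Real.Gamma (1 + b * ε) = b * ε * Real.Gamma (b * ε) := by
      rw [add_comm, Real.Gamma_add_one hbε]
    have e3 : Real.Gamma (1 + (a + b) * ε) = (a + b) * ε * Real.Gamma ((a + b) * ε) := by
      rw [add_comm, Real.Gamma_add_one habε]
    have e4 : a * ε + b * ε = (a + b) * ε := by ring
    have hΓab : Real.Gamma ((a + b) * ε) ≠ 0 :=
      (Real.Gamma_pos_of_pos (by positivity)).ne'
    rw [e1, e2, e3]
    unfold betaFn
    rw [e4]
    field_simp
  -- combine
  have hden : (a + b) / (a * b) ≠ 0 := by positivity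
  have key := h1.div h2 hden
  have heq : 1 / a / ((a + b) / (a * b)) = b / (a + b) := by
    field_simp
  rw [heq] at key
  refine Filter.Tendsto.congr' ?_ key
  filter_upwards [self_mem_nhdsWithin] with ε (hε0 : (0:ℝ) < ε)
  simp only [Pi.div_apply]
  unfold Ireg
  rw [mul_div_mul_left _ _ (ne_of_gt hε0)]
end
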